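/- (Validity of the two-sided IM for a singleton assertion.) Fix θ₀ > 0 and let ρ : ℕ → ℕ be injective. Define the belief function bel(x) = ∑_{x' : ρ(x') < ρ(x)} e^{-θ₀} θ₀^{x'} / x'!. If X is Poisson(θ₀)-distributed, then for every α ∈ (0,1), P{ bel(X) ≥ 1 − α } ≤ α; equivalently, the plausibility pl(X) = 1 − bel(X) satisfies P{ pl(X) ≤ α } ≤ α, so the 100(1−α)% plausibility region {θ₀ : pl_X(θ₀) > α} has coverage probability at least 1 − α. -/

import Mathlib

/-- The Poisson(θ) probability mass function. -/
noncomputable def poisPMF (θ : ℝ) (x : ℕ) : ℝ := Real.exp (-θ) * θ ^ x / Nat.factorial x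

lemma poisPMF_nonneg (θ : ℝ) (hθ : 0 < θ) (x : ℕ) : 0 ≤ poisPMF θ x := by
  unfold poisPMF; positivity

lemma poisPMF_summable (θ : ℝ) : Summable (poisPMF θ) := by
  refine ((Real.summable_pow_div_factorial θ).mul_left (Real.exp (-θ))).congr ?_
  intro n; simp [poisPMF, mul_div_assoc]

lemma poisPMF_tsum (θ : ℝ) : ∑' x, poisPMF θ x = 1 := by
  have h : ∑' n : ℕ, θ ^ n / (Nat.factorial n : ℝ) = Real.exp θ := by
    rw [Real.exp_eq_exp_ℝ, NormedSpace.exp_eq_tsum_div]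
  calc ∑' x, poisPMF θ x
      = Real.exp (-θ) * ∑' n : ℕ, θ ^ n / (Nat.factorial n : ℝ) := by
        rw [← tsum_mul_left]; simp [poisPMF, mul_div_assoc]
    _ = 1 := by rw [h, ← Real.exp_add]; simp

/-- Validity of the two-sided IM for a singleton assertion: Fix θ₀ > 0 and
let ρ : ℕ → ℕ be injective. Define the belief function
bel(x) = ∑_{x' : ρ(x') < ρ(x)} e^{-θ₀} θ₀^{x'} / x'!. If X is Poisson(θ₀)-distributed,
then for every α ∈ (0,1), P{ bel(X) ≥ 1 − α } ≤ α; equivalently, the plausibility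
pl(X) = 1 − bel(X) satisfies P{ pl(X) ≤ α } ≤ α. -/
theorem two_sided_IM_valid (θ₀ : ℝ) (hθ₀ : 0 < θ₀) (ρ : ℕ → ℕ)
    (hρ : Function.Injective ρ) (bel : ℕ → ℝ)
    (hbel : ∀ x : ℕ, bel x = ∑' x' : {x' : ℕ // ρ x' < ρ x}, poisPMF θ₀ x')
    (α : ℝ) (hα : α ∈ Set.Ioo (0:ℝ) 1) :
    (∑' x : {x : ℕ // 1 - α ≤ bel x}, poisPMF θ₀ x) ≤ α ∧
    (∑' x : {x : ℕ // 1 - bel x ≤ α}, poisPMF θ₀ x) ≤ α := by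
  obtain ⟨hα0, hα1⟩ := hα
  have hsum := poisPMF_summable θ₀
  have hnn := poisPMF_nonneg θ₀ hθ₀
  -- tail function
  set tail : ℕ → ℝ := fun x => ∑' x' : {x' : ℕ // ¬ ρ x' < ρ x}, poisPMF θ₀ x' with htail
  have hsplit : ∀ x, bel x + tail x = 1 := by
    intro x
    have := Summable.tsum_subtype_add_tsum_subtype_compl hsum {x' : ℕ | ρ x' < ρ x}
    rw [poisPMF_tsum] at this
    have hc : ({x' : ℕ | ρ x' < ρ x}ᶜ : Set ℕ) = {x' : ℕ | ¬ ρ x' < ρ x} := rfl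
    rw [hbel x, htail]
    exact this
  have key : ∀ (A : Set ℕ), (∀ x ∈ A, tail x ≤ α) →
      (∑' x : A, poisPMF θ₀ x) ≤ α := by
    intro A hA
    rcases A.eq_empty_or_nonempty with hAe | ⟨x₀, hx₀⟩
    · subst hAe; simp [tsum_empty]; linarith
    · -- pick element of A with minimal ρ value
      have hS : (ρ '' A).Nonempty := ⟨ρ x₀, x₀, hx₀, rfl⟩
      obtain ⟨xm, hxm, hxmρ⟩ := Nat.sInf_mem hS
      have hmin : ∀ x ∈ A, ¬ ρ x < ρ xm := by
        intro x hx
        rw [hxmρ]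
        exact not_lt.2 (Nat.sInf_le ⟨x, hx, rfl⟩)
      have hle : (∑' x : A, poisPMF θ₀ x) ≤ tail xm := by
        refine Summable.tsum_le_tsum_of_inj
          (fun x : A => (⟨x.1, hmin x.1 x.2⟩ : {x' : ℕ // ¬ ρ x' < ρ xm}))
          ?_ (fun c _ => hnn c.1) (fun n => le_refl _) ?_ ?_
        · intro a b hab
          exact Subtype.ext (by simpa using congrArg Subtype.val hab)
        · exact (hsum.subtype A)
        · exact (hsum.subtype _)
      exact hle.trans (hA xm hxm)
  have hset : {x : ℕ | 1 - α ≤ bel x} = {x : ℕ | 1 - bel x ≤ α} := by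
    ext x; simp only [Set.mem_setOf_eq]; constructor <;> intro h <;> linarith
  have h1 : (∑' x : {x : ℕ // 1 - α ≤ bel x}, poisPMF θ₀ x) ≤ α := by
    apply key {x : ℕ | 1 - α ≤ bel x}
    intro x hx
    have := hsplit x
    simp only [Set.mem_setOf_eq] at hx
    linarith
  refine ⟨h1, ?_⟩
  have e1 : (∑' x : {x : ℕ // 1 - bel x ≤ α}, poisPMF θ₀ x)
      = ∑' x : ℕ, Set.indicator {x : ℕ | 1 - bel x ≤ α} (poisPMF θ₀) x :=
    tsum_subtype _ _
  have e2 : (∑' x : {x : ℕ // 1 - α ≤ bel x}, poisPMF θ₀ x)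
      = ∑' x : ℕ, Set.indicator {x : ℕ | 1 - α ≤ bel x} (poisPMF θ₀) x :=
    tsum_subtype _ _
  rw [e1, ← hset, ← e2]; exact h1
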